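/- Let H be a real Hilbert space and A : H → H a bounded self-adjoint linear operator satisfying γ‖v‖² ≤ ⟨Av, v⟩ ≤ Γ‖v‖² for all v ∈ H, where 0 < γ ≤ Γ; set μ := 2/(γ + Γ), ρ := (Γ − γ)/(Γ + γ), and let f ∈ H and u* ∈ H with Au* = f. Let τ_1 ∈ (0,1), u ∈ H, and r ∈ H with ‖r − (Au − f)‖ ≤ τ_1 ‖r‖. Then ‖(u − μr) − u*‖ ≤ (ρ + 2τ_1/(1 − τ_1)) ‖u − u*‖. -/

import Mathlib

open scoped RealInnerProductSpace

lemma sa_norm_bound {H : Type*} [NormedAddCommGroup H] [InnerProductSpace ℝ H]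
    (B : H →L[ℝ] H) (hsym : ∀ v w : H, ⟪B v, w⟫ = ⟪v, B w⟫)
    (c : ℝ) (hc : 0 ≤ c) (h : ∀ v : H, |⟪B v, v⟫| ≤ c * ‖v‖ ^ 2)
    (v : H) : ‖B v‖ ≤ c * ‖v‖ := by
  by_cases hBv : B v = 0
  · simp [hBv]; positivity
  have hBvn : (0:ℝ) < ‖B v‖ := norm_pos_iff.mpr hBv
  set w : H := (‖v‖ / ‖B v‖) • B v with hw
  have hwnn : ‖w‖ = ‖v‖ := by
    rw [hw, norm_smul, Real.norm_eq_abs, abs_div, abs_norm, abs_norm,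
      div_mul_cancel₀ _ hBvn.ne']
  have hpol : 4 * ⟪B v, w⟫ = ⟪B (v + w), v + w⟫ - ⟪B (v - w), v - w⟫ := by
    have h1 : ⟪B w, v⟫ = ⟪B v, w⟫ := by rw [hsym w v, real_inner_comm]
    simp only [map_add, map_sub, inner_add_add_self, inner_sub_sub_self,
      inner_add_left, inner_sub_left, inner_add_right, inner_sub_right]
    ring_nf
    linarith [h1]
  have hinner : ⟪B v, w⟫ = ‖v‖ * ‖B v‖ := by
    rw [hw, real_inner_smul_right, real_inner_self_eq_norm_sq]
    field_simp
  have hbound : 4 * (‖v‖ * ‖B v‖) ≤ c * ‖v + w‖ ^ 2 + c * ‖v - w‖ ^ 2 := by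
    rw [← hinner, hpol]
    have h1 := (abs_le.mp (h (v + w))).2
    have h2 := (abs_le.mp (h (v - w))).1
    linarith
  have hpar : ‖v + w‖ ^ 2 + ‖v - w‖ ^ 2 = 2 * (‖v‖ ^ 2 + ‖w‖ ^ 2) := by
    have := parallelogram_law_with_norm ℝ v w
    linarith
  have : 4 * (‖v‖ * ‖B v‖) ≤ 4 * (c * ‖v‖ ^ 2) := by
    calc 4 * (‖v‖ * ‖B v‖) ≤ c * ‖v + w‖ ^ 2 + c * ‖v - w‖ ^ 2 := hbound
    _ = c * (‖v + w‖ ^ 2 + ‖v - w‖ ^ 2) := by ring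
    _ = 4 * (c * ‖v‖ ^ 2) := by rw [hpar, hwnn]; ring
  have hv : 0 < ‖v‖ := by
    rcases eq_or_lt_of_le (norm_nonneg v) with hv0 | hv0
    · exfalso; apply hBv; have : v = 0 := by rwa [eq_comm, norm_eq_zero] at hv0
      simp [this]
    · exact hv0
  nlinarith [this, hv]

/-- **One Richardson step with inexactly evaluated residual.** If `A` is bounded self-adjoint
with spectrum in `[γ, Γ]`, `μ = 2/(γ+Γ)`, `ρ = (Γ-γ)/(Γ+γ)`, `A u* = f`, and the computed
residual `r` satisfies `‖r - (A u - f)‖ ≤ τ₁‖r‖` with `τ₁ ∈ (0,1)`, then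
`‖(u - μ r) - u*‖ ≤ (ρ + 2τ₁/(1-τ₁))‖u - u*‖`. -/
theorem richardson_step_inexact_residual
    {H : Type*} [NormedAddCommGroup H] [InnerProductSpace ℝ H] [CompleteSpace H]
    (A : H →L[ℝ] H) (hsa : ∀ v w : H, ⟪A v, w⟫ = ⟪v, A w⟫)
    (γ Γ : ℝ) (hγ : 0 < γ) (hγΓ : γ ≤ Γ)
    (hlow : ∀ v : H, γ * ‖v‖ ^ 2 ≤ ⟪A v, v⟫)
    (hupp : ∀ v : H, ⟪A v, v⟫ ≤ Γ * ‖v‖ ^ 2)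
    (f ustar : H) (hsol : A ustar = f)
    (τ₁ : ℝ) (hτ₁0 : 0 < τ₁) (hτ₁1 : τ₁ < 1)
    (u r : H) (hres : ‖r - (A u - f)‖ ≤ τ₁ * ‖r‖) :
    ‖(u - (2 / (γ + Γ)) • r) - ustar‖
      ≤ ((Γ - γ) / (Γ + γ) + 2 * τ₁ / (1 - τ₁)) * ‖u - ustar‖ := by
  set μ : ℝ := 2 / (γ + Γ) with hμ
  set ρ : ℝ := (Γ - γ) / (Γ + γ) with hρ
  have hsum : (0:ℝ) < γ + Γ := by linarith
  have hΓ0 : (0:ℝ) < Γ := lt_of_lt_of_le hγ hγΓ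
  have hμ0 : 0 < μ := by positivity
  set e : H := u - ustar with he
  -- ‖A v‖ ≤ Γ ‖v‖
  have hAnorm : ∀ v : H, ‖A v‖ ≤ Γ * ‖v‖ := by
    apply sa_norm_bound A hsa Γ hΓ0.le
    intro v
    rw [abs_le]
    constructor
    · nlinarith [hlow v, sq_nonneg ‖v‖]
    · exact hupp v
  -- contraction lemma for B = I - μ A
  set B : H →L[ℝ] H := ContinuousLinearMap.id ℝ H - μ • A with hB
  have hBapp : ∀ v : H, B v = v - μ • A v := fun v => rfl
  have hBsym : ∀ v w : H, ⟪B v, w⟫ = ⟪v, B w⟫ := by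
    intro v w
    simp only [hBapp, inner_sub_left, inner_sub_right, real_inner_smul_left,
      real_inner_smul_right, hsa v w]
  have hBnorm : ∀ v : H, ‖B v‖ ≤ ρ * ‖v‖ := by
    apply sa_norm_bound B hBsym ρ (div_nonneg (by linarith) (by linarith))
    intro v
    have hBin : ⟪B v, v⟫ = ‖v‖ ^ 2 - μ * ⟪A v, v⟫ := by
      rw [hBapp, inner_sub_left, real_inner_smul_left, real_inner_self_eq_norm_sq]
    rw [abs_le, hBin]
    have h1 := hlow v
    have h2 := hupp v
    constructor
    · have : ρ = -(1 - μ * Γ) := by rw [hρ, hμ]; field_simp [show Γ + γ ≠ 0 by linarith, hsum.ne']; ring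
      nlinarith [mul_le_mul_of_nonneg_left h2 hμ0.le]
    · have : ρ = 1 - μ * γ := by rw [hρ, hμ]; field_simp [show Γ + γ ≠ 0 by linarith, hsum.ne']; ring
      nlinarith [mul_le_mul_of_nonneg_left h1 hμ0.le]
  -- residual identity: A u - f = A e
  have hAe : A u - f = A e := by rw [← hsol, he, map_sub]
  rw [hAe] at hres
  -- bound ‖r‖
  have hr1 : (1 - τ₁) * ‖r‖ ≤ ‖A e‖ := by
    have := norm_sub_norm_le r (A e)
    have htri : ‖r‖ - ‖A e‖ ≤ τ₁ * ‖r‖ := le_trans (by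
      have := norm_sub_norm_le r (A e); linarith [this, hres]) (le_refl _)
    linarith
  have hrAe : ‖r - A e‖ ≤ τ₁ / (1 - τ₁) * ‖A e‖ := by
    have h1τ : (0:ℝ) < 1 - τ₁ := by linarith
    calc ‖r - A e‖ ≤ τ₁ * ‖r‖ := hres
      _ ≤ τ₁ / (1 - τ₁) * ‖A e‖ := by
          rw [div_mul_eq_mul_div, le_div_iff₀ h1τ]
          nlinarith [hr1]
  -- decomposition
  have hdec : (u - μ • r) - ustar = B e - μ • (r - A e) := by
    rw [hBapp, smul_sub, he]; abel
  have h1τ : (0:ℝ) < 1 - τ₁ := by linarith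
  calc ‖(u - μ • r) - ustar‖ = ‖B e - μ • (r - A e)‖ := by rw [hdec]
    _ ≤ ‖B e‖ + ‖μ • (r - A e)‖ := norm_sub_le _ _
    _ ≤ ρ * ‖e‖ + μ * (τ₁ / (1 - τ₁) * ‖A e‖) := by
        have := hBnorm e
        have h2 : ‖μ • (r - A e)‖ = μ * ‖r - A e‖ := by
          rw [norm_smul, Real.norm_eq_abs, abs_of_pos hμ0]
        rw [h2]
        have := mul_le_mul_of_nonneg_left hrAe hμ0.le
        linarith [hBnorm e]
    _ ≤ ρ * ‖e‖ + μ * (τ₁ / (1 - τ₁) * (Γ * ‖e‖)) := by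
        have := hAnorm e
        have hnn : 0 ≤ μ * (τ₁ / (1 - τ₁)) := by positivity
        nlinarith [hAnorm e]
    _ ≤ (ρ + 2 * τ₁ / (1 - τ₁)) * ‖e‖ := by
        have hμΓ : μ * Γ ≤ 2 := by
          rw [hμ, div_mul_eq_mul_div, div_le_iff₀ hsum]; nlinarith
        have hnn : 0 ≤ τ₁ / (1 - τ₁) * ‖e‖ := by positivity
        have : μ * (τ₁ / (1 - τ₁) * (Γ * ‖e‖)) ≤ 2 * (τ₁ / (1 - τ₁) * ‖e‖) := by
          nlinarith
        have h2 : 2 * τ₁ / (1 - τ₁) = 2 * (τ₁ / (1 - τ₁)) := by ring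
        rw [add_mul, h2]
        nlinarith
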